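/- Let 0 < α ≤ 1 and let h belong to the class G(α). Then for every z in the open unit disk 𝔻, Re(z·h''(z)/h'(z)) ≤ α/2 − (1/(2α))·(1 − |z|²)·|h''(z)/h'(z)|². -/

import Mathlib

open Complex Metric Set

/-- The class `G(α)`: analytic functions `h` on the unit disk with `h(0) = 0`, `h'(0) = 1`,
`h'(z) ≠ 0` on the disk, and `Re (z h''(z) / (α h'(z))) < 1/2` on the disk. -/
noncomputable def GClass (α : ℝ) (h : ℂ → ℂ) : Prop :=
  AnalyticOnNhd ℂ h (ball (0:ℂ) 1) ∧ h 0 = 0 ∧ deriv h 0 = 1 ∧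
    (∀ z ∈ ball (0:ℂ) 1, deriv h z ≠ 0) ∧
    ∀ z ∈ ball (0:ℂ) 1, (z * deriv (deriv h) z / ((α : ℂ) * deriv h z)).re < 1/2

theorem stmt_0 {α : ℝ} (hα0 : 0 < α) (hα1 : α ≤ 1) {h : ℂ → ℂ} (hG : GClass α h) :
    ∀ z ∈ ball (0:ℂ) 1,
      (z * deriv (deriv h) z / deriv h z).re ≤
        α / 2 - (1 / (2 * α)) * (1 - ‖z‖ ^ 2) *
          (‖deriv (deriv h) z / deriv h z‖) ^ 2 := by
  obtain ⟨hh, h00, hd0, hne, hre0⟩ := hG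
  have hαne : (α : ℂ) ≠ 0 := by exact_mod_cast hα0.ne'
  set q : ℂ → ℂ := fun z => z * deriv (deriv h) z / ((α : ℂ) * deriv h z) with hqdef
  have hre : ∀ z ∈ ball (0:ℂ) 1, (q z).re < 1/2 := hre0
  have hd1 : AnalyticOnNhd ℂ (deriv h) (ball (0:ℂ) 1) := hh.deriv
  have hd2 : AnalyticOnNhd ℂ (deriv (deriv h)) (ball (0:ℂ) 1) := hd1.deriv
  have hqan : AnalyticOnNhd ℂ q (ball (0:ℂ) 1) :=
    (analyticOnNhd_id.mul hd2).div (analyticOnNhd_const.mul hd1)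
      (fun z hz => mul_ne_zero hαne (hne z hz))
  have hq0 : q 0 = 0 := by simp [hqdef]
  have h1q : ∀ z ∈ ball (0:ℂ) 1, 1 - q z ≠ 0 := by
    intro z hz hcon
    have hq1 : q z = 1 := by linear_combination -hcon
    have := hre z hz
    rw [hq1] at this
    simp at this
    norm_num at this
  set φ : ℂ → ℂ := fun z => q z / (1 - q z) with hφdef
  have hφ0 : φ 0 = 0 := by simp [hφdef, hq0]
  have hφd : DifferentiableOn ℂ φ (ball (0:ℂ) 1) :=
    hqan.differentiableOn.div
      ((differentiableOn_const _).sub hqan.differentiableOn) h1q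
  have hnormsq : ∀ w : ℂ, Complex.normSq (1 - w) = 1 - 2 * w.re + Complex.normSq w := by
    intro w
    simp [Complex.normSq_apply, Complex.sub_re, Complex.sub_im]
    ring
  have habs : ∀ z ∈ ball (0:ℂ) 1, ‖q z‖ < ‖1 - q z‖ := by
    intro z hz
    have h1 := hnormsq (q z)
    have h2 := hre z hz
    have h3 : Complex.normSq (q z) < Complex.normSq (1 - q z) := by
      rw [h1]; linarith
    rw [← Complex.sq_norm, ← Complex.sq_norm] at h3
    nlinarith [norm_nonneg (q z),
      norm_nonneg (1 - q z)]
  have hmaps : MapsTo φ (ball (0:ℂ) 1) (ball (φ 0) 1) := by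
    rw [hφ0]
    intro z hz
    rw [mem_ball, dist_zero_right, hφdef]
    simp only [norm_div]
    rw [div_lt_one (by
      have := habs z hz
      have := norm_nonneg (q z)
      linarith)]
    exact habs z hz
  have key : ∀ z ∈ ball (0:ℂ) 1, ‖dslope φ 0 z‖ ≤ 1 := by
    intro z hz
    have := Complex.norm_dslope_le_div_of_mapsTo_ball hφd (hmaps.mono_right ball_subset_closedBall) hz
    simpa using this
  intro z hz
  have hzre := hre z hz
  have hAeq : z * deriv (deriv h) z / deriv h z = (α : ℂ) * q z := by
    rw [hqdef]
    field_simp [hne z hz]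
  have hLHS : (z * deriv (deriv h) z / deriv h z).re = α * (q z).re := by
    rw [hAeq]
    simp [Complex.mul_re]
  rcases eq_or_ne z 0 with rfl | hz0
  · -- z = 0 case
    have h0mem : (0:ℂ) ∈ ball (0:ℂ) 1 := by simp
    have hdq2 : DifferentiableAt ℂ (deriv (deriv h)) 0 := (hd2 0 h0mem).differentiableAt
    have hdq1 : DifferentiableAt ℂ (deriv h) 0 := (hd1 0 h0mem).differentiableAt
    have hqdiff : DifferentiableAt ℂ q 0 := (hqan 0 h0mem).differentiableAt
    have hderivq : deriv q 0 = deriv (deriv h) 0 / (α : ℂ) := by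
      rw [hqdef]
      rw [deriv_fun_div (differentiableAt_fun_id.fun_mul hdq2) (hdq1.const_mul _)
        (mul_ne_zero hαne (hne 0 h0mem))]
      rw [deriv_fun_mul differentiableAt_fun_id hdq2]
      simp [hd0]
      field_simp
    have hderivφ : deriv φ 0 = deriv q 0 := by
      rw [hφdef]
      rw [deriv_fun_div hqdiff ((differentiableAt_const (1:ℂ)).fun_sub hqdiff)
        (by simp [hq0])]
      simp [hq0]
    have hb := key 0 h0mem
    rw [dslope_same, hderivφ, hderivq] at hb
    have hb' : ‖deriv (deriv h) 0‖ ≤ α := by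
      rw [norm_div] at hb
      have : ‖((α : ℂ))‖ = α := by
        rw [Complex.norm_real, Real.norm_eq_abs, abs_of_pos hα0]
      rw [this, div_le_one hα0] at hb
      exact hb
    have habs0 : ‖(0:ℂ)‖ = 0 := norm_zero
    rw [hLHS, hq0]
    simp only [habs0, hd0, div_one, Complex.zero_re, mul_zero]
    have hsq : ‖deriv (deriv h) 0‖ ^ 2 ≤ α ^ 2 := by
      nlinarith [norm_nonneg (deriv (deriv h) 0)]
    rw [div_mul_eq_mul_div, div_mul_eq_mul_div, sub_nonneg,
      div_le_div_iff₀ (by positivity) (by norm_num : (0:ℝ) < 2)]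
    nlinarith
  · -- z ≠ 0 case
    have hb := key z hz
    rw [dslope_of_ne _ hz0, slope_def_field, hφ0, sub_zero, sub_zero, hφdef] at hb
    simp only [norm_div] at hb
    have hzpos : 0 < ‖z‖ := by
      simpa [norm_pos_iff] using hz0
    have h1qpos : 0 < ‖1 - q z‖ := by
      simpa [norm_pos_iff] using h1q z hz
    have hqle : ‖q z‖ ≤ ‖z‖ * ‖1 - q z‖ := by
      rw [div_div, div_le_one (by positivity)] at hb
      linarith [hb]
    set r := ‖z‖ with hr
    set aq := ‖q z‖ with haq
    set t := (q z).re with ht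
    have ha1sq : ‖1 - q z‖ ^ 2 = 1 - 2 * t + aq ^ 2 := by
      rw [haq, ht, Complex.sq_norm, Complex.sq_norm, hnormsq]
    have hkey : aq ^ 2 ≤ r ^ 2 * (1 - 2 * t + aq ^ 2) := by
      nlinarith [hqle, norm_nonneg (q z), ha1sq,
        mul_nonneg hzpos.le h1qpos.le]
    have hr1 : r < 1 := by
      rw [hr]
      simpa [Complex.dist_eq] using hz
    have hAq : ‖deriv (deriv h) z / deriv h z‖ = α * aq / r := by
      have heq : deriv (deriv h) z / deriv h z = (α : ℂ) * q z / z := by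
        rw [← hAeq, mul_div_assoc, mul_comm z (deriv (deriv h) z / deriv h z),
          mul_div_assoc, div_self hz0, mul_one]
      rw [heq, norm_div, norm_mul, Complex.norm_real, Real.norm_eq_abs, abs_of_pos hα0]
    rw [hLHS, hAq]
    have hX : (1 - r ^ 2) * aq ^ 2 / r ^ 2 ≤ 1 - 2 * t := by
      rw [div_le_iff₀ (by positivity)]
      nlinarith [hkey]
    have hrw : (1 / (2 * α)) * (1 - r ^ 2) * (α * aq / r) ^ 2
        = α * ((1 - r ^ 2) * aq ^ 2 / r ^ 2) / 2 := by
      field_simp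
    rw [hrw]
    nlinarith [hX, hα0]
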